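/- For all natural numbers m and n, Cat(n+1)·F(n + 2m) = Σ_{i=0}^{n} Cat(i)·L(i + m)·Cat(n−i)·F(n−i + m), where Cat(n) denotes the n-th Catalan number. -/

import Mathlib

noncomputable def genFib (a b : ℝ) : ℕ → ℝ
  | 0 => 0
  | 1 => 1
  | n + 2 => a * genFib a b (n + 1) + b * genFib a b n

noncomputable def genLuc (a b : ℝ) : ℕ → ℝ
  | 0 => 2
  | 1 => a
  | n + 2 => a * genLuc a b (n + 1) + b * genLuc a b n

private lemma two_step {P : ℕ → Prop} (h0 : P 0) (h1 : P 1)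
    (hs : ∀ n, P n → P (n + 1) → P (n + 2)) (n : ℕ) : P n := by
  have h : P n ∧ P (n + 1) := by
    induction n with
    | zero => exact ⟨h0, h1⟩
    | succ k ih => exact ⟨ih.2, hs k ih.1 ih.2⟩
  exact h.1

private lemma luc_eq (a b : ℝ) (p : ℕ) :
    genLuc a b p = 2 * genFib a b (p + 1) - a * genFib a b p := by
  induction p using two_step with
  | h0 => simp [genLuc, genFib]
  | h1 => simp [genLuc, genFib]; ring
  | hs k ih1 ih2 =>
    show a * genLuc a b (k + 1) + b * genLuc a b k = _
    rw [ih1, ih2]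
    show _ = 2 * (a * genFib a b (k + 2) + b * genFib a b (k + 1)) -
      a * (a * genFib a b (k + 1) + b * genFib a b k)
    ring

private lemma key (a b : ℝ) (p q : ℕ) :
    genLuc a b p * genFib a b q + genLuc a b q * genFib a b p =
      2 * genFib a b (p + q) := by
  induction q using two_step with
  | h0 => simp [genLuc, genFib]
  | h1 =>
    have := luc_eq a b p
    simp [genLuc, genFib]
    linarith [this]
  | hs k ih1 ih2 =>
    have e1 : genFib a b (k + 2) = a * genFib a b (k + 1) + b * genFib a b k := rfl
    have e2 : genLuc a b (k + 2) = a * genLuc a b (k + 1) + b * genLuc a b k := rfl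
    have e3 : genFib a b (p + (k + 2)) =
        a * genFib a b (p + (k + 1)) + b * genFib a b (p + k) := by
      have : p + (k + 2) = (p + k) + 2 := by ring
      rw [this]
      rfl
    rw [e1, e2, e3]
    linear_combination a * ih2 + b * ih1

theorem genFib_catalan_identity (a b : ℝ) (m n : ℕ) :
    (catalan (n + 1) : ℝ) * genFib a b (n + 2 * m) =
      ∑ i ∈ Finset.range (n + 1),
        (catalan i : ℝ) * genLuc a b (i + m) * (catalan (n - i) : ℝ) *
          genFib a b (n - i + m) := by
  set S := ∑ i ∈ Finset.range (n + 1),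
        (catalan i : ℝ) * genLuc a b (i + m) * (catalan (n - i) : ℝ) *
          genFib a b (n - i + m) with hS
  have hrefl : S = ∑ i ∈ Finset.range (n + 1),
      (catalan (n - i) : ℝ) * genLuc a b (n - i + m) * (catalan i : ℝ) *
        genFib a b (i + m) := by
    rw [hS, ← Finset.sum_range_reflect]
    apply Finset.sum_congr rfl
    intro i hi
    simp only [Finset.mem_range] at hi
    have h1 : n + 1 - 1 - i = n - i := by omega
    have h2 : n - (n - i) = i := by omega
    rw [h1, h2]
  have hdouble : 2 * S = 2 * (catalan (n + 1) : ℝ) * genFib a b (n + 2 * m) := by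
    have : 2 * S = S + S := by ring
    rw [this]
    nth_rewrite 2 [hrefl]
    rw [hS, ← Finset.sum_add_distrib]
    have hsum : ∀ i ∈ Finset.range (n + 1),
        (catalan i : ℝ) * genLuc a b (i + m) * (catalan (n - i) : ℝ) *
            genFib a b (n - i + m) +
          (catalan (n - i) : ℝ) * genLuc a b (n - i + m) * (catalan i : ℝ) *
            genFib a b (i + m) =
        (catalan i : ℝ) * (catalan (n - i) : ℝ) * (2 * genFib a b (n + 2 * m)) := by
      intro i hi
      simp only [Finset.mem_range] at hi
      have hk := key a b (i + m) (n - i + m)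
      have harith : (i + m) + (n - i + m) = n + 2 * m := by omega
      rw [harith] at hk
      linear_combination (catalan i : ℝ) * (catalan (n - i) : ℝ) * hk
    rw [Finset.sum_congr rfl hsum]
    have hc : (catalan (n + 1) : ℝ) =
        ∑ i ∈ Finset.range (n + 1), (catalan i : ℝ) * (catalan (n - i) : ℝ) := by
      rw [catalan_succ]
      push_cast
      exact Fin.sum_univ_eq_sum_range (fun i => ((catalan i : ℝ) * (catalan (n - i) : ℝ))) (n + 1)
    rw [← Finset.sum_mul, ← hc]
    ring
  linarith [hdouble]
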